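/- Let λ₁, λ₂, μ₁, μ₂, θ_s > 0, γ_s = λ₁/(λ₁+λ₂). Define f and g and π_{m,n} = f(m)·g(m+n) as in the product form of Theorem 1 (f(m) = ∏_{i=1}^{m} ((μ₁+μ₂·[i>1]+(i-1)θ_s)(1-γ_s))/(μ₂+iθ_s), g(n) = ∏_{i=1}^{n} (λ₁+λ₂)/(μ₁+μ₂+iθ_s)). Then for all m ≥ 1 and n ≥ 1, π_{m,n}·(μ₁+μ₂+λ₁+λ₂+(m+n)θ_s) = π_{m,n+1}·(n+1)·θ_s + π_{m+1,n}·(μ₂+(m+1)θ_s) + π_{m,n-1}·(λ₁+λ₂) + ∑_{k=0}^{m} π_{m-k,n+k+1}·μ₁·γ_s·(1-γ_s)^k. -/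

import Mathlib

theorem stmt_14 (l1 l2 m1 m2 θ : ℝ) (hl1 : 0 < l1) (hl2 : 0 < l2) (hm1 : 0 < m1)
    (hm2 : 0 < m2) (hθ : 0 < θ) (γ : ℝ) (hγ : γ = l1 / (l1 + l2))
    (f g : ℕ → ℝ)
    (hf : ∀ m : ℕ, f m = ∏ i ∈ Finset.Icc 1 m,
      ((m1 + (if 1 < i then m2 else 0) + ((i : ℝ) - 1) * θ) * (1 - γ)) /
        (m2 + (i : ℝ) * θ))
    (hg : ∀ n : ℕ, g n = ∏ i ∈ Finset.Icc 1 n, (l1 + l2) / (m1 + m2 + (i : ℝ) * θ))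
    (π : ℕ → ℕ → ℝ) (hπ : ∀ m n : ℕ, π m n = f m * g (m + n)) :
    ∀ m n : ℕ, 1 ≤ m → 1 ≤ n →
      π m n * (m1 + m2 + l1 + l2 + ((m : ℝ) + n) * θ) =
        π m (n + 1) * ((n : ℝ) + 1) * θ + π (m + 1) n * (m2 + ((m : ℝ) + 1) * θ) +
          π m (n - 1) * (l1 + l2) +
          ∑ k ∈ Finset.range (m + 1), π (m - k) (n + k + 1) * m1 * γ * (1 - γ) ^ k := by
  have hf1 : f 1 = m1 * (1 - γ) / (m2 + θ) := by
    rw [hf]; norm_num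
  have hfs : ∀ p : ℕ, 1 ≤ p →
      f (p + 1) = f p * ((m1 + m2 + (p : ℝ) * θ) * (1 - γ)) / (m2 + ((p : ℝ) + 1) * θ) := by
    intro p hp
    rw [hf, hf, Finset.prod_Icc_succ_top (by omega : 1 ≤ p + 1)]
    rw [if_pos (by omega : 1 < p + 1)]
    push_cast
    ring
  have hgs : ∀ N : ℕ,
      g (N + 1) = g N * ((l1 + l2) / (m1 + m2 + ((N : ℝ) + 1) * θ)) := by
    intro N
    rw [hg, hg, Finset.prod_Icc_succ_top (by omega : 1 ≤ N + 1)]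
    push_cast
    ring
  have K : ∀ p : ℕ, 1 ≤ p →
      (m1 + m2 + (p : ℝ) * θ) * f p
        = m1 * ∑ k ∈ Finset.range (p + 1), f (p - k) * (1 - γ) ^ k := by
    intro p hp
    induction p with
    | zero => omega
    | succ q ih =>
      rcases Nat.eq_zero_or_pos q with hq | hq
      · subst hq
        have hf0 : f 0 = 1 := by rw [hf]; simp
        simp only [Finset.sum_range_succ, Finset.sum_range_zero]
        norm_num [hf0, hf1]
        have hd : m2 + θ ≠ 0 := by positivity
        field_simp
        ring
      · have ih' := ih hq
        have hstep := hfs q hq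
        have hsum : ∑ k ∈ Finset.range (q + 2), f (q + 1 - k) * (1 - γ) ^ k
            = (1 - γ) * (∑ k ∈ Finset.range (q + 1), f (q - k) * (1 - γ) ^ k)
              + f (q + 1) := by
          rw [Finset.sum_range_succ' (fun k => f (q + 1 - k) * (1 - γ) ^ k) (q + 1)]
          rw [Finset.mul_sum]
          congr 1
          · refine Finset.sum_congr rfl ?_
            intro k hk
            have : q + 1 - (k + 1) = q - k := by omega
            rw [this, pow_succ]
            ring
          · simp
        rw [hsum]
        have hd : m2 + ((q : ℝ) + 1) * θ ≠ 0 := by positivity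
        rw [hstep]
        push_cast
        field_simp
        linear_combination ((1 - γ) * (m2 + ((q : ℝ) + 1) * θ)) * ih'
  intro m n hm hn
  obtain ⟨n', rfl⟩ : ∃ n', n = n' + 1 := ⟨n - 1, by omega⟩
  have hd1 : (0:ℝ) < m2 + ((m : ℝ) + 1) * θ := by positivity
  have h1 : f (m + 1) * (m2 + ((m : ℝ) + 1) * θ)
      = f m * ((m1 + m2 + (m : ℝ) * θ) * (1 - γ)) := by
    rw [hfs m hm]; field_simp
  have h2 : g (m + n' + 1) * (m1 + m2 + ((m : ℝ) + (n' : ℝ) + 1) * θ)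
      = g (m + n') * (l1 + l2) := by
    have hd : (0:ℝ) < m1 + m2 + ((m : ℝ) + (n' : ℝ) + 1) * θ := by positivity
    have e : (↑(m + n') : ℝ) + 1 = (m : ℝ) + (n' : ℝ) + 1 := by push_cast; ring
    rw [hgs (m + n'), e, mul_assoc, div_mul_cancel₀ _ hd.ne']
  have h3 : g (m + n' + 2) * (m1 + m2 + ((m : ℝ) + (n' : ℝ) + 2) * θ)
      = g (m + n' + 1) * (l1 + l2) := by
    have hd : (0:ℝ) < m1 + m2 + ((m : ℝ) + (n' : ℝ) + 2) * θ := by positivity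
    have h := hgs (m + n' + 1)
    rw [show m + n' + 1 + 1 = m + n' + 2 from by omega] at h
    have e : (↑(m + n' + 1) : ℝ) + 1 = (m : ℝ) + (n' : ℝ) + 2 := by push_cast; ring
    rw [h, e, mul_assoc, div_mul_cancel₀ _ hd.ne']
  have hsum : ∑ k ∈ Finset.range (m + 1), π (m - k) (n' + 1 + k + 1) * m1 * γ * (1 - γ) ^ k
      = g (m + n' + 2) * γ * (m1 * ∑ k ∈ Finset.range (m + 1), f (m - k) * (1 - γ) ^ k) := by
    rw [Finset.mul_sum, Finset.mul_sum]
    refine Finset.sum_congr rfl ?_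
    intro k hk
    rw [hπ]
    have : m - k + (n' + 1 + k + 1) = m + n' + 2 := by
      simp only [Finset.mem_range] at hk; omega
    rw [this]
    ring
  rw [hsum, ← K m hm]
  simp only [hπ]
  rw [show m + (n' + 1 + 1) = m + n' + 2 from by omega,
      show m + 1 + (n' + 1) = m + n' + 2 from by omega,
      show m + (n' + 1 - 1) = m + n' from by omega,
      show m + (n' + 1) = m + n' + 1 from by omega]
  push_cast
  linear_combination (-(g (m + n' + 2))) * h1 + f m * h2 - f m * h3
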